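/- 95% concentration of the discrete Gaussian (rigorous form of the margin-of-error bound MOE ≤ ⌊1.96σ⌋ derived in the paper): For every real σ > 0, if X is distributed according to the discrete Gaussian N_ℤ(σ²), then Pr[|X| ≤ ⌊1.96·σ⌋ + 1] ≥ 0.95, where ⌊·⌋ denotes the floor function. -/

import Mathlib

open Finset Real Set MeasureTheory



lemma sum_deriv (m : ℕ) (x : ℝ) :
    HasDerivAt (fun y : ℝ => ∑ k ∈ range (m+1), (-y)^k / k.factorial)
      (-(∑ k ∈ range m, (-x)^k / k.factorial)) x := by
  have h : ∀ k ∈ range (m+1), HasDerivAt (fun y : ℝ => (-y)^k / (k.factorial : ℝ))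
      ((k * (-x)^(k-1) * (-1)) / k.factorial) x := by
    intro k _
    have h1 : HasDerivAt (fun y : ℝ => (-y)^k) ((k : ℝ) * (-x)^(k-1) * (-1)) x := by
      simpa [Function.comp_def] using (hasDerivAt_pow k (-x)).comp x (hasDerivAt_neg x)
    exact h1.div_const _
  have h2 := HasDerivAt.fun_sum h
  refine h2.congr_deriv (Eq.symm ?_)
  rw [Finset.sum_range_succ']
  have : ∀ i ∈ range m, -((-x)^i / (i.factorial : ℝ)) =
      ((i+1 : ℕ) * (-x)^((i+1)-1) * (-1)) / ((i+1).factorial : ℝ) := by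
    intro i _
    rw [Nat.add_sub_cancel, Nat.factorial_succ]
    push_cast
    field_simp
  rw [← Finset.sum_neg_distrib]
  rw [Finset.sum_congr rfl this]
  simp

lemma exp_neg_lower {m : ℕ}
    (h : ∀ x : ℝ, 0 ≤ x → Real.exp (-x) ≤ ∑ k ∈ range m, (-x)^k / k.factorial) :
    ∀ x : ℝ, 0 ≤ x → ∑ k ∈ range (m+1), (-x)^k / k.factorial ≤ Real.exp (-x) := by
  intro x hx
  set G : ℝ → ℝ := fun y => Real.exp (-y) - ∑ k ∈ range (m+1), (-y)^k / k.factorial with hG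
  have hd : ∀ y : ℝ, HasDerivAt G ((∑ k ∈ range m, (-y)^k / k.factorial) - Real.exp (-y)) y := by
    intro y
    have h1 : HasDerivAt (fun y : ℝ => Real.exp (-y)) (-Real.exp (-y)) y := by
      simpa [Function.comp_def] using (Real.hasDerivAt_exp (-y)).comp y (hasDerivAt_neg y)
    have := h1.sub (sum_deriv m y)
    exact this.congr_deriv (by ring)
  have mono : MonotoneOn G (Set.Ici (0:ℝ)) := by
    apply monotoneOn_of_deriv_nonneg (convex_Ici 0)
    · exact (fun y _ => (hd y).differentiableAt.continuousAt.continuousWithinAt)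
    · exact fun y _ => (hd y).differentiableAt.differentiableWithinAt
    · intro y hy
      rw [interior_Ici] at hy
      rw [(hd y).deriv]
      have := h y (le_of_lt hy)
      linarith
  have h0 : G 0 = 0 := by
    simp [hG, Finset.sum_range_succ']
  have := mono Set.self_mem_Ici hx hx
  rw [h0] at this
  simpa [hG, sub_nonneg] using this

lemma exp_neg_upper {m : ℕ}
    (h : ∀ x : ℝ, 0 ≤ x → ∑ k ∈ range m, (-x)^k / k.factorial ≤ Real.exp (-x)) :
    ∀ x : ℝ, 0 ≤ x → Real.exp (-x) ≤ ∑ k ∈ range (m+1), (-x)^k / k.factorial := by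
  intro x hx
  set G : ℝ → ℝ := fun y => (∑ k ∈ range (m+1), (-y)^k / k.factorial) - Real.exp (-y) with hG
  have hd : ∀ y : ℝ, HasDerivAt G (Real.exp (-y) - ∑ k ∈ range m, (-y)^k / k.factorial) y := by
    intro y
    have h1 : HasDerivAt (fun y : ℝ => Real.exp (-y)) (-Real.exp (-y)) y := by
      simpa [Function.comp_def] using (Real.hasDerivAt_exp (-y)).comp y (hasDerivAt_neg y)
    have := (sum_deriv m y).sub h1
    exact this.congr_deriv (by ring)
  have mono : MonotoneOn G (Set.Ici (0:ℝ)) := by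
    apply monotoneOn_of_deriv_nonneg (convex_Ici 0)
    · exact (fun y _ => (hd y).differentiableAt.continuousAt.continuousWithinAt)
    · exact fun y _ => (hd y).differentiableAt.differentiableWithinAt
    · intro y hy
      rw [interior_Ici] at hy
      rw [(hd y).deriv]
      have := h y (le_of_lt hy)
      linarith
  have h0 : G 0 = 0 := by
    simp [hG, Finset.sum_range_succ']
  have := mono Set.self_mem_Ici hx hx
  rw [h0] at this
  simpa [hG, sub_nonneg] using this

lemma exp_neg_ge (n : ℕ) :
    ∀ x : ℝ, 0 ≤ x → ∑ k ∈ range (2*n+2), (-x)^k / k.factorial ≤ Real.exp (-x) := by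
  induction n with
  | zero =>
    intro x hx
    have := Real.add_one_le_exp (-x)
    simp only [Finset.sum_range_succ, Finset.sum_range_zero]
    norm_num
    linarith
  | succ n ih =>
    have h1 := exp_neg_upper ih
    have h2 := exp_neg_lower h1
    have : 2*(n+1)+2 = (2*n+2)+1+1 := by ring
    rw [this]
    exact h2

lemma exp_neg_ge12 : ∀ x : ℝ, 0 ≤ x → ∑ k ∈ range 12, (-x)^k / k.factorial ≤ Real.exp (-x) := by
  have := exp_neg_ge 5
  norm_num at this ⊢
  exact this



lemma gauss_int_lower :
    (0.475 : ℝ) * Real.sqrt (2*Real.pi) ≤ ∫ u in (0:ℝ)..(1.96:ℝ), Real.exp (-u^2/2) := by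
  have hstep1 : (∫ u in (0:ℝ)..(1.96:ℝ), ∑ k ∈ range 12, ((-1:ℝ)^k / (2^k * k.factorial)) * u^(2*k))
      ≤ ∫ u in (0:ℝ)..(1.96:ℝ), Real.exp (-u^2/2) := by
    apply intervalIntegral.integral_mono_on (by norm_num)
    · apply Continuous.intervalIntegrable
      continuity
    · apply Continuous.intervalIntegrable
      continuity
    · intro u hu
      have h0 : (0:ℝ) ≤ u^2/2 := by positivity
      have := exp_neg_ge12 (u^2/2) h0
      calc ∑ k ∈ range 12, ((-1:ℝ)^k / (2^k * k.factorial)) * u^(2*k)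
          = ∑ k ∈ range 12, (-(u^2/2))^k / k.factorial := by
            apply Finset.sum_congr rfl
            intro k _
            rw [show (-(u^2/2)) = (-1)/2 * u^2 by ring, mul_pow, div_pow, pow_mul]
            ring
        _ ≤ Real.exp (-(u^2/2)) := this
        _ = Real.exp (-u^2/2) := by ring_nf
  refine le_trans ?_ hstep1
  rw [intervalIntegral.integral_finset_sum]
  · simp_rw [intervalIntegral.integral_const_mul, integral_pow]
    have hsqrt : Real.sqrt (2*Real.pi) ≤ 2.506629 := by
      rw [show (2.506629:ℝ) = Real.sqrt (2.506629^2) by rw [Real.sqrt_sq]; norm_num]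
      apply Real.sqrt_le_sqrt
      nlinarith [Real.pi_lt_d6]
    have h475 : (0.475:ℝ) * Real.sqrt (2*Real.pi) ≤ 0.475 * 2.506629 := by nlinarith
    refine le_trans h475 ?_
    simp [Finset.sum_range_succ]
    norm_num [Nat.factorial]
  · intro k _
    apply Continuous.intervalIntegrable
    continuity


lemma summable_gauss_nat (c : ℝ) (hc : 0 < c) :
    Summable (fun n : ℕ => Real.exp (-c * (n:ℝ)^2)) := by
  refine Summable.of_nonneg_of_le (f := fun n : ℕ => Real.exp (-c) ^ n)
    (fun n => (Real.exp_pos _).le) ?_ ?_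
  · intro n
    show Real.exp (-c * (n:ℝ)^2) ≤ Real.exp (-c) ^ n
    rw [← Real.exp_nat_mul]
    apply Real.exp_le_exp.2
    have h1 : (n:ℝ) ≤ (n:ℝ)^2 := by exact_mod_cast Nat.le_self_pow two_ne_zero n
    nlinarith
  · exact summable_geometric_of_lt_one (Real.exp_pos _).le
      (Real.exp_lt_one_iff.2 (by linarith))

lemma summable_gauss (c : ℝ) (hc : 0 < c) :
    Summable (fun n : ℤ => Real.exp (-c * (n:ℝ)^2)) := by
  apply Summable.of_nat_of_neg
  · exact summable_gauss_nat c hc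
  · apply (summable_gauss_nat c hc).congr
    intro n
    push_cast
    ring_nf

lemma S_ge (σ : ℝ) (hσ : 0 < σ) :
    σ * Real.sqrt (2*Real.pi) ≤ ∑' n : ℤ, Real.exp (-(n:ℝ)^2/(2*σ^2)) := by
  set a : ℝ := (2*Real.pi*σ^2)⁻¹ with ha_def
  have ha : 0 < a := by positivity
  have hrw : (fun n : ℤ => Real.exp (-(n:ℝ)^2/(2*σ^2)))
      = fun n : ℤ => Real.exp (-Real.pi * a * (n:ℝ)^2) := by
    funext n
    congr 1
    rw [ha_def]
    field_simp
  rw [hrw, Real.tsum_exp_neg_mul_int_sq ha]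
  have h1 : (1:ℝ) / a ^ ((1:ℝ)/2) = σ * Real.sqrt (2*Real.pi) := by
    rw [ha_def, Real.inv_rpow (by positivity), one_div, inv_inv, ← Real.sqrt_eq_rpow,
      Real.sqrt_mul (by positivity), Real.sqrt_sq hσ.le]
    ring
  rw [h1]
  have h2 : (1:ℝ) ≤ ∑' n : ℤ, Real.exp (-Real.pi / a * (n:ℝ)^2) := by
    have hsum : Summable (fun n : ℤ => Real.exp (-(Real.pi/a) * (n:ℝ)^2)) :=
      summable_gauss _ (by positivity)
    have := Summable.le_tsum (f := fun n : ℤ => Real.exp (-Real.pi / a * (n:ℝ)^2))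
      (by simpa [neg_div] using hsum) 0 (fun j _ => (Real.exp_pos _).le)
    simpa using this
  exact le_mul_of_one_le_right (by positivity) h2

set_option maxHeartbeats 1000000

lemma tail_le (σ : ℝ) (hσ : 0 < σ) (M : ℕ) (hM : 1.96*σ ≤ (M:ℝ)) :
    ∑' n : ℕ, Real.exp (-((n:ℝ)+(M:ℝ)+1)^2/(2*σ^2)) ≤
      σ * Real.sqrt (2*Real.pi) / 2 - σ * ∫ u in (0:ℝ)..(1.96:ℝ), Real.exp (-u^2/2) := by
  set f : ℝ → ℝ := fun x => Real.exp (-x^2/(2*σ^2)) with hf_def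
  have hb : (0:ℝ) < (2*σ^2)⁻¹ := by positivity
  have hf_eq : f = fun x => Real.exp (-(2*σ^2)⁻¹ * x^2) := by
    rw [hf_def]; funext x
    rw [show -x^2/(2*σ^2) = -(2*σ^2)⁻¹*x^2 from by ring]
  have hf_int : Integrable f := by rw [hf_eq]; exact integrable_exp_neg_mul_sq hb
  have hf_nonneg : ∀ x, 0 ≤ f x := fun x => (Real.exp_pos _).le
  have hant : AntitoneOn f (Set.Ici (0:ℝ)) := by
    intro u hu v hv huv
    simp only [hf_def]
    apply Real.exp_le_exp.2
    have h2σ : (0:ℝ) < 2*σ^2 := by positivity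
    rw [div_le_div_iff_of_pos_right h2σ]
    simp only [Set.mem_Ici] at hu hv
    nlinarith
  -- step 1 : tail sum ≤ ∫ over Ioi M
  have step1 : ∑' n : ℕ, Real.exp (-((n:ℝ)+(M:ℝ)+1)^2/(2*σ^2)) ≤ ∫ x in Ioi (M:ℝ), f x := by
    apply Real.tsum_le_of_sum_range_le (fun n => (Real.exp_pos _).le)
    intro N
    have h1 : ∑ i ∈ range N, f ((M:ℝ) + ((i:ℕ)+1 : ℕ)) ≤ ∫ x in (M:ℝ)..((M:ℝ)+(N:ℕ)), f x := by
      apply AntitoneOn.sum_le_integral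
      apply hant.mono
      intro x hx
      simp only [Set.mem_Icc] at hx
      simp only [Set.mem_Ici]
      have : (0:ℝ) ≤ (M:ℝ) := Nat.cast_nonneg M
      linarith [hx.1]
    have h2 : ∑ i ∈ range N, Real.exp (-((i:ℝ)+(M:ℝ)+1)^2/(2*σ^2))
        = ∑ i ∈ range N, f ((M:ℝ) + ((i:ℕ)+1 : ℕ)) := by
      apply Finset.sum_congr rfl
      intro i _
      simp only [hf_def]
      push_cast
      ring_nf
    rw [h2]
    apply h1.trans
    rw [intervalIntegral.integral_of_le (by linarith [Nat.cast_nonneg (α := ℝ) N])]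
    apply setIntegral_mono_set hf_int.integrableOn
    · exact Filter.Eventually.of_forall hf_nonneg
    · exact Filter.Eventually.of_forall (fun x hx => hx.1)
  -- step 2 : ∫ over Ioi M ≤ ∫ over Ioi (1.96σ)
  have step2 : ∫ x in Ioi (M:ℝ), f x ≤ ∫ x in Ioi (1.96*σ), f x := by
    apply setIntegral_mono_set hf_int.integrableOn
    · exact Filter.Eventually.of_forall hf_nonneg
    · exact Filter.Eventually.of_forall (fun x hx => lt_of_le_of_lt hM hx)
  -- step 3 : ∫ over Ioi (1.96σ) = σ√(2π)/2 - σ K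
  have hsplit : (∫ x in Ioc (0:ℝ) (1.96*σ), f x) + ∫ x in Ioi (1.96*σ), f x
      = ∫ x in Ioi (0:ℝ), f x := by
    rw [← MeasureTheory.setIntegral_union (Set.Ioc_disjoint_Ioi le_rfl) measurableSet_Ioi
      hf_int.integrableOn hf_int.integrableOn, Set.Ioc_union_Ioi_eq_Ioi (by positivity)]
  have hIoi0 : ∫ x in Ioi (0:ℝ), f x = σ * Real.sqrt (2*Real.pi) / 2 := by
    rw [hf_eq, integral_gaussian_Ioi]
    rw [show Real.pi / (2*σ^2)⁻¹ = (2*Real.pi) * (σ*σ) from by field_simp]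
    rw [Real.sqrt_mul (by positivity), Real.sqrt_mul_self hσ.le]
    ring
  have hIoc : ∫ x in Ioc (0:ℝ) (1.96*σ), f x = σ * ∫ u in (0:ℝ)..(1.96:ℝ), Real.exp (-u^2/2) := by
    rw [← intervalIntegral.integral_of_le (by positivity)]
    have : ∀ x : ℝ, f x = Real.exp (-(x/σ)^2/2) := by
      intro x
      simp only [hf_def]
      rw [show -x^2/(2*σ^2) = -(x/σ)^2/2 from by ring]
    simp_rw [this]
    rw [intervalIntegral.integral_comp_div (f := fun u => Real.exp (-u^2/2)) (ne_of_gt hσ)]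
    rw [zero_div, mul_div_assoc, div_self (ne_of_gt hσ)]
    simp
  linarith [step1, step2, hsplit, hIoi0, hIoc]


/-- The discrete Gaussian mass function `N_ℤ(v)` (real-valued) with variance
parameter `v = σ²`. -/
noncomputable def discreteGaussianPMF (v : ℝ) (x : ℤ) : ℝ :=
  Real.exp (-(x : ℝ) ^ 2 / (2 * v)) / ∑' y : ℤ, Real.exp (-(y : ℝ) ^ 2 / (2 * v))

/-- 95% concentration of the discrete Gaussian: if `X ∼ N_ℤ(σ²)` then
`Pr[|X| ≤ ⌊1.96σ⌋ + 1] ≥ 0.95`. -/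
theorem discreteGaussian_concentration (σ : ℝ) (hσ : 0 < σ) :
    (0.95 : ℝ) ≤
      ∑' x : ℤ, if |x| ≤ ⌊(1.96 : ℝ) * σ⌋ + 1 then discreteGaussianPMF (σ ^ 2) x else 0 := by
  set m : ℤ := ⌊(1.96 : ℝ) * σ⌋ + 1 with hm_def
  have hm1 : 1 ≤ m := by
    have : (0:ℤ) ≤ ⌊(1.96 : ℝ) * σ⌋ := Int.floor_nonneg.2 (by positivity)
    omega
  set M : ℕ := m.toNat with hM_def
  have hMm : (M:ℤ) = m := Int.toNat_of_nonneg (by omega)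
  have hMmR : (M:ℝ) = (m:ℝ) := by exact_mod_cast congrArg (Int.cast : ℤ → ℝ) hMm
  have hMge : 1.96*σ ≤ (M:ℝ) := by
    rw [hMmR]
    have := Int.lt_floor_add_one ((1.96:ℝ) * σ)
    rw [hm_def]
    push_cast
    linarith
  set Fz : ℤ → ℝ := fun n => Real.exp (-(n:ℝ)^2/(2*σ^2)) with hFz_def
  set S : ℝ := ∑' y : ℤ, Real.exp (-(y:ℝ)^2/(2*σ^2)) with hS_def
  have hpmf : ∀ x : ℤ, discreteGaussianPMF (σ ^ 2) x = Fz x / S := fun x => rfl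
  -- summability
  have hSm : Summable Fz := by
    apply (summable_gauss ((2*σ^2)⁻¹) (by positivity)).congr
    intro n
    rw [hFz_def]
    rw [show -(2*σ^2)⁻¹ * (n:ℝ)^2 = -(n:ℝ)^2/(2*σ^2) from by ring]
  have hN : Summable (fun n : ℕ => Fz n) := hSm.comp_injective Nat.cast_injective
  have hNeg : Summable (fun n : ℕ => Fz (-((n:ℤ)+1))) := by
    have hinj : Function.Injective (fun n : ℕ => -((n:ℤ)+1)) := by
      intro a b h; simpa using h
    exact hSm.comp_injective hinj
  -- tail
  set Ttail : ℝ := ∑' n : ℕ, Real.exp (-((n:ℝ)+(M:ℝ)+1)^2/(2*σ^2)) with hT_def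
  have E2 : ∑' n : ℕ, Fz n = (∑ i ∈ range (M+1), Fz i) + Ttail := by
    rw [← Summable.sum_add_tsum_nat_add (M+1) hN]
    congr 1
    rw [hT_def]
    apply tsum_congr
    intro n
    rw [hFz_def]
    push_cast
    ring_nf
  have E3 : ∑' n : ℕ, Fz (-((n:ℤ)+1)) = (∑ i ∈ range M, Fz (-((i:ℤ)+1))) + Ttail := by
    rw [← Summable.sum_add_tsum_nat_add M hNeg]
    congr 1
    rw [hT_def]
    apply tsum_congr
    intro n
    rw [hFz_def]
    push_cast
    ring_nf
  have E1 : S = (∑ i ∈ range (M+1), Fz i) + (∑ i ∈ range M, Fz (-((i:ℤ)+1))) + 2*Ttail := by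
    rw [hS_def, show (∑' y : ℤ, Real.exp (-(y:ℝ)^2/(2*σ^2))) = ∑' y : ℤ, Fz y from rfl,
      tsum_of_nat_of_neg_add_one hN hNeg, E2, E3]
    ring
  -- the target sum
  set g : ℤ → ℝ := fun x => if |x| ≤ m then discreteGaussianPMF (σ ^ 2) x else 0 with hg_def
  have habs_nat : ∀ n : ℕ, |(n:ℤ)| = (n:ℤ) := fun n => abs_of_nonneg (by positivity)
  have habs_neg : ∀ n : ℕ, |(-((n:ℤ)+1))| = (n:ℤ)+1 := by
    intro n; rw [abs_neg]; exact abs_of_nonneg (by positivity)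
  have hgN0 : ∀ n : ℕ, n ∉ Finset.range (M+1) → g n = 0 := by
    intro n hn
    simp only [hg_def]
    simp only [Finset.mem_range] at hn
    rw [if_neg]
    rw [habs_nat]
    omega
  have hgNeg0 : ∀ n : ℕ, n ∉ Finset.range M → g (-((n:ℤ)+1)) = 0 := by
    intro n hn
    simp only [hg_def]
    simp only [Finset.mem_range] at hn
    rw [if_neg]
    rw [habs_neg]
    omega
  have hgN : Summable (fun n : ℕ => g n) := summable_of_ne_finset_zero hgN0
  have hgNeg : Summable (fun n : ℕ => g (-((n:ℤ)+1))) := summable_of_ne_finset_zero hgNeg0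
  have htarget : (∑' x : ℤ, g x)
      = ((∑ i ∈ range (M+1), Fz i) + (∑ i ∈ range M, Fz (-((i:ℤ)+1)))) / S := by
    rw [tsum_of_nat_of_neg_add_one hgN hgNeg, tsum_eq_sum hgN0, tsum_eq_sum hgNeg0]
    have e1 : ∑ i ∈ range (M+1), g i = (∑ i ∈ range (M+1), Fz i) / S := by
      rw [Finset.sum_div]
      apply Finset.sum_congr rfl
      intro i hi
      simp only [Finset.mem_range] at hi
      simp only [hg_def]
      rw [if_pos (by rw [habs_nat]; omega), hpmf]
    have e2 : ∑ i ∈ range M, g (-((i:ℤ)+1)) = (∑ i ∈ range M, Fz (-((i:ℤ)+1))) / S := by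
      rw [Finset.sum_div]
      apply Finset.sum_congr rfl
      intro i hi
      simp only [Finset.mem_range] at hi
      simp only [hg_def]
      rw [if_pos (by rw [habs_neg]; omega), hpmf]
    rw [e1, e2, ← add_div]
  -- bounds
  have hK := gauss_int_lower
  have htail := tail_le σ hσ M hMge
  have hSlow := S_ge σ hσ
  rw [← hS_def] at hSlow
  have hSpos : 0 < S := lt_of_lt_of_le (by positivity) hSlow
  have hA : 0 ≤ ∑ i ∈ range (M+1), Fz i :=
    Finset.sum_nonneg (fun i _ => (Real.exp_pos _).le)
  have hB : 0 ≤ ∑ i ∈ range M, Fz (-((i:ℤ)+1)) :=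
    Finset.sum_nonneg (fun i _ => (Real.exp_pos _).le)
  have hTnn : 0 ≤ Ttail := tsum_nonneg (fun n => (Real.exp_pos _).le)
  have hKσ : σ * ((0.475:ℝ) * Real.sqrt (2*Real.pi)) ≤
      σ * ∫ u in (0:ℝ)..(1.96:ℝ), Real.exp (-u^2/2) :=
    mul_le_mul_of_nonneg_left hK hσ.le
  show (0.95:ℝ) ≤ ∑' x : ℤ, g x
  rw [htarget, le_div_iff₀ hSpos]
  rw [← hT_def] at htail
  nlinarith [Real.sqrt_nonneg (2*Real.pi)]
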